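/- Let V be a finite-dimensional complex vector space equipped with a representation of sl(2,ℂ) with standard generators X, Y, H satisfying [X,Y] = H, [H,X] = 2X, [H,Y] = -2Y. Then every eigenvalue of the action of H on V is an integer. -/

import Mathlib

/-- Let `V` be a finite-dimensional complex vector space carrying a
representation of `sl(2,ℂ)`, given by operators `X Y H : End ℂ V` satisfying the standard
relations `[X,Y] = H`, `[H,X] = 2X`, `[H,Y] = -2Y`.  Then every eigenvalue of `H` is an
integer. -/
theorem sl2_eigenvalue_integer (V : Type*) [AddCommGroup V] [Module ℂ V]
    [FiniteDimensional ℂ V] (X Y H : Module.End ℂ V)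
    (hXY : ⁅X, Y⁆ = H) (hHX : ⁅H, X⁆ = (2 : ℂ) • X) (hHY : ⁅H, Y⁆ = -((2 : ℂ) • Y))
    (μ : ℂ) (hμ : Module.End.HasEigenvalue H μ) :
    ∃ n : ℤ, μ = n := by
  obtain ⟨v, hv⟩ := hμ.exists_hasEigenvector
  have hv0 : v ≠ 0 := hv.right
  have hvE : H v = μ • v := hv.apply_eq_smul
  by_cases hH : H = 0
  · refine ⟨0, ?_⟩
    rw [hH] at hvE
    simp only [LinearMap.zero_apply] at hvE
    rcases smul_eq_zero.mp hvE.symm with h | h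
    · simpa using h
    · exact absurd h hv0
  letI : LieRing (Module.End ℂ V) := LieRing.ofAssociativeRing
  have t : IsSl2Triple H X Y := by
    refine ⟨hH, hXY, ?_, ?_⟩
    · rw [hHX, two_smul, two_smul]
    · rw [hHY, two_smul, two_smul]
  -- commutation: H ∘ X = X ∘ H + 2 • X
  have hcomm : ∀ w : V, H (X w) = (2:ℂ) • X w + X (H w) := by
    intro w
    have := congrArg (fun f : Module.End ℂ V => f w) hHX
    simpa [Ring.lie_def, sub_eq_iff_eq_add, LinearMap.sub_apply, Module.End.mul_apply,
      LinearMap.smul_apply] using this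
  -- eigenvalue ladder
  have key : ∀ n : ℕ, H ((X ^ n) v) = (μ + 2 * n) • (X ^ n) v := by
    intro n
    induction n with
    | zero => simpa using hvE
    | succ n ih =>
      have : (X ^ (n+1)) v = X ((X ^ n) v) := by
        rw [pow_succ', Module.End.mul_apply]
      rw [this, hcomm, ih, map_smul]
      push_cast
      module
  -- some power kills v
  have hzero : ∃ n : ℕ, (X ^ n) v = 0 := by
    by_contra! contra
    have hs : (Set.range <| fun (n : ℕ) ↦ μ + 2 * n).Infinite := by
      rw [Set.infinite_range_iff (fun n m ↦ by simp)]; infer_instance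
    exact hs ((H.eigenvectors_linearIndependent
      {μ + 2 * n | n : ℕ}
      (fun ⟨s, hs⟩ ↦ (X ^ Classical.choose hs) v)
      (fun ⟨r, hr⟩ ↦ by
        simp [key, Classical.choose_spec hr, contra,
          Module.End.hasEigenvector_iff, Module.End.mem_eigenspace_iff])).finite)
  obtain ⟨n, hn₁, hn₂⟩ := Nat.exists_not_and_succ_of_not_zero_of_exists
    (p := fun n => (X ^ n) v = 0) (by simpa using hv0) hzero
  have P : t.HasPrimitiveVectorWith ((X ^ n) v) (μ + 2 * n) := by
    refine ⟨hn₁, ?_, ?_⟩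
    · simpa using key n
    · have : X ((X ^ n) v) = (X ^ (n+1)) v := by
        rw [pow_succ', Module.End.mul_apply]
      simpa [this] using hn₂
  obtain ⟨k, hk⟩ := P.exists_nat
  refine ⟨(k : ℤ) - 2 * n, ?_⟩
  push_cast
  linear_combination hk
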